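/- Let d ≥ 1, let Δ ⊆ ℝ^d be a reflexive polytope, and let Δ = Δ_1 + … + Δ_r be a Minkowski sum decomposition where each Δ_i is a lattice polytope containing 0. For each i let E_i be the set of extreme points e of Δ* with min_{x ∈ Δ_i} ⟨x, e⟩ = -1, and let ∇_i be the convex hull of E_i ∪ {0}. Then for all indices i and j and all x ∈ Δ_i, y ∈ ∇_j: ⟨x, y⟩ ≥ -1 if i = j, and ⟨x, y⟩ ≥ 0 if i ≠ j. -/

import Mathlib

open Pointwise

/-- The standard inner product on `ℝ^d`. -/
def dotp {d : ℕ} (x y : Fin d → ℝ) : ℝ := ∑ i, x i * y i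

/-- A point of `ℝ^d` with integer coordinates (a lattice point of `ℤ^d`). -/
def IsLatticePt {d : ℕ} (x : Fin d → ℝ) : Prop := ∀ i, ∃ n : ℤ, x i = (n : ℝ)

/-- A lattice polytope: the convex hull of a finite set of lattice points. -/
def IsLatticePolytope {d : ℕ} (P : Set (Fin d → ℝ)) : Prop :=
  ∃ S : Finset (Fin d → ℝ), (∀ x ∈ S, IsLatticePt x) ∧ P = convexHull ℝ (S : Set (Fin d → ℝ))

/-- The dual set `A* = {x : ⟨y,x⟩ ≥ -1 ∀ y ∈ A}`. -/
def dualSet {d : ℕ} (A : Set (Fin d → ℝ)) : Set (Fin d → ℝ) :=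
  {x | ∀ y ∈ A, -1 ≤ dotp y x}

/-- A reflexive polytope: a lattice polytope with `0` in its interior whose dual is
also a lattice polytope. -/
def IsReflexivePolytope {d : ℕ} (P : Set (Fin d → ℝ)) : Prop :=
  IsLatticePolytope P ∧ (0 : Fin d → ℝ) ∈ interior P ∧ IsLatticePolytope (dualSet P)

/-- The minimum (infimum) of `⟨x, z⟩` over `x ∈ A`. -/
noncomputable def minDot {d : ℕ} (A : Set (Fin d → ℝ)) (z : Fin d → ℝ) : ℝ :=
  sInf ((fun x => dotp x z) '' A)

lemma dotp_zero_left {d : ℕ} (y : Fin d → ℝ) : dotp 0 y = 0 := by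
  simp [dotp]

lemma dotp_zero_right {d : ℕ} (x : Fin d → ℝ) : dotp x 0 = 0 := by
  simp [dotp]

lemma dotp_linear_right {d : ℕ} (x : Fin d → ℝ) :
    IsLinearMap ℝ (fun y => dotp x y) := by
  constructor
  · intro y z
    simp [dotp, mul_add, Finset.sum_add_distrib]
  · intro c y
    simp only [dotp, Pi.smul_apply, smul_eq_mul, Finset.mul_sum]
    congr 1; ext i; ring

lemma dotp_sum_left {d : ℕ} {ι : Type*} (s : Finset ι) (f : ι → Fin d → ℝ)
    (y : Fin d → ℝ) : dotp (∑ i ∈ s, f i) y = ∑ i ∈ s, dotp (f i) y := by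
  simp only [dotp, Finset.sum_apply, Finset.sum_mul]
  exact Finset.sum_comm

lemma latticePolytope_isCompact {d : ℕ} {P : Set (Fin d → ℝ)}
    (h : IsLatticePolytope P) : IsCompact P := by
  obtain ⟨S, -, rfl⟩ := h
  exact S.finite_toSet.isCompact_convexHull ℝ

lemma dotp_continuous_left {d : ℕ} (z : Fin d → ℝ) :
    Continuous (fun x : Fin d → ℝ => dotp x z) := by
  unfold dotp
  exact continuous_finset_sum _ fun i _ => (continuous_apply i).mul continuous_const

/-- the pairing inequalities `⟨Δ_i, ∇_j⟩ ≥ -δ_{ij}` of Remark 3.3. -/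
theorem nef_pairing_inequalities {d r : ℕ} (hd : 1 ≤ d)
    (Δ : Set (Fin d → ℝ)) (hΔ : IsReflexivePolytope Δ)
    (D : Fin r → Set (Fin d → ℝ)) (hlat : ∀ i, IsLatticePolytope (D i))
    (h0 : ∀ i, (0 : Fin d → ℝ) ∈ D i) (hsum : Δ = ∑ i, D i)
    (E : Fin r → Set (Fin d → ℝ))
    (hE : ∀ i, E i = {e ∈ Set.extremePoints ℝ (dualSet Δ) | minDot (D i) e = -1})
    (N : Fin r → Set (Fin d → ℝ))
    (hN : ∀ i, N i = convexHull ℝ (E i ∪ {0})) :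
    ∀ i j, ∀ x ∈ D i, ∀ y ∈ N j,
      (i = j → -1 ≤ dotp x y) ∧ (i ≠ j → 0 ≤ dotp x y) := by
  -- basic facts about each D i
  have hKi : ∀ i, IsCompact (D i) := fun i => latticePolytope_isCompact (hlat i)
  have himgK : ∀ (i) (e : Fin d → ℝ), IsCompact ((fun x => dotp x e) '' D i) :=
    fun i e => (hKi i).image (dotp_continuous_left e)
  have himgNe : ∀ (i) (e : Fin d → ℝ), ((fun x => dotp x e) '' D i).Nonempty :=
    fun i e => ⟨dotp 0 e, 0, h0 i, rfl⟩
  have hbdd : ∀ (i) (e : Fin d → ℝ), BddBelow ((fun x => dotp x e) '' D i) :=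
    fun i e => (himgK i e).bddBelow
  -- minDot (D i) e ≤ dotp x e for x ∈ D i
  have hle : ∀ (i) (e : Fin d → ℝ), ∀ x ∈ D i, minDot (D i) e ≤ dotp x e :=
    fun i e x hx => csInf_le (hbdd i e) ⟨x, hx, rfl⟩
  -- minDot (D i) e ≤ 0
  have hle0 : ∀ (i) (e : Fin d → ℝ), minDot (D i) e ≤ 0 := by
    intro i e
    have := hle i e 0 (h0 i)
    rwa [dotp_zero_left] at this
  -- the inf is attained
  have hattain : ∀ (i) (e : Fin d → ℝ), ∃ x ∈ D i, dotp x e = minDot (D i) e := by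
    intro i e
    have := (himgK i e).sInf_mem (himgNe i e)
    obtain ⟨x, hx, hxe⟩ := this
    exact ⟨x, hx, hxe⟩
  -- for e in the dual of Δ, ∑ minDot ≥ -1
  have hsum_min : ∀ e ∈ dualSet Δ, -1 ≤ ∑ i, minDot (D i) e := by
    intro e he
    choose g hg hge using fun i => hattain i e
    have hmem : (∑ i, g i) ∈ Δ := by
      rw [hsum]
      rw [Set.mem_fintype_sum]
      exact ⟨g, fun i => hg i, rfl⟩
    have := he _ hmem
    rw [dotp_sum_left] at this
    calc (-1 : ℝ) ≤ ∑ i, dotp (g i) e := this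
      _ = ∑ i, minDot (D i) e := by exact Finset.sum_congr rfl fun i _ => hge i
  -- for e ∈ E j and i ≠ j, minDot (D i) e = 0
  have hkey : ∀ (i j : Fin r), i ≠ j → ∀ e ∈ E j, 0 ≤ minDot (D i) e := by
    intro i j hij e he
    rw [hE j] at he
    obtain ⟨hex, hmin⟩ := he
    have hedual : e ∈ dualSet Δ := hex.1
    have h1 := hsum_min e hedual
    have hsplit : ∑ k, minDot (D k) e = minDot (D j) e + ∑ k ∈ Finset.univ.erase j, minDot (D k) e := by
      exact (Finset.add_sum_erase _ _ (Finset.mem_univ j)).symm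
    have h2 : 0 ≤ ∑ k ∈ Finset.univ.erase j, minDot (D k) e := by
      have := h1
      rw [hsplit, hmin] at this
      linarith
    -- each term in the erased sum is ≤ 0, so the i-term is ≥ the whole sum minus others
    have h3 : ∑ k ∈ Finset.univ.erase j, minDot (D k) e ≤ minDot (D i) e := by
      have hi : i ∈ Finset.univ.erase j := Finset.mem_erase.2 ⟨hij, Finset.mem_univ i⟩
      rw [← Finset.add_sum_erase _ _ hi]
      have : ∑ k ∈ (Finset.univ.erase j).erase i, minDot (D k) e ≤ 0 :=
        Finset.sum_nonpos fun k _ => hle0 k e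
      linarith
    linarith
  -- main argument
  intro i j x hx y hy
  rw [hN j] at hy
  constructor
  · rintro rfl
    have hconv : Convex ℝ {w : Fin d → ℝ | -1 ≤ dotp x w} :=
      convex_halfSpace_ge (dotp_linear_right x) (-1)
    have hsub : E i ∪ {0} ⊆ {w : Fin d → ℝ | -1 ≤ dotp x w} := by
      rintro e (he | he)
      · rw [hE i] at he
        obtain ⟨hex, hmin⟩ := he
        have : minDot (D i) e ≤ dotp x e := hle i e x hx
        rw [hmin] at this
        exact this
      · simp only [Set.mem_singleton_iff] at he
        subst he
        simp [dotp_zero_right]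
    exact convexHull_min hsub hconv hy
  · intro hij
    have hconv : Convex ℝ {w : Fin d → ℝ | 0 ≤ dotp x w} :=
      convex_halfSpace_ge (dotp_linear_right x) 0
    have hsub : E j ∪ {0} ⊆ {w : Fin d → ℝ | 0 ≤ dotp x w} := by
      rintro e (he | he)
      · have h1 : 0 ≤ minDot (D i) e := hkey i j hij e he
        have h2 : minDot (D i) e ≤ dotp x e := hle i e x hx
        exact le_trans h1 h2
      · simp only [Set.mem_singleton_iff] at he
        subst he
        simp [dotp_zero_right]
    exact convexHull_min hsub hconv hy
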